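/- arXiv:1803.02219 — 7 statements merged into one kernel-verified Lean document; each statement's English description precedes it below -/
import Mathlib

section
/- Let D ⊆ {0,...,L_x} × {0,...,L_y} ⊆ ℤ² with L_x, L_y ≥ 2 satisfy D + D = {0,...,2L_x} × {0,...,2L_y}. Then D contains all twelve points {(x,y) : x ∈ {1, L_x−1}, y ∈ {0, L_y}} ∪ {(x,y) : x ∈ {0, L_x}, y ∈ {0, 1, L_y−1, L_y}}. -/
open Pointwise

/-- Full corner property: all four corners and their boundary
neighbors belong to any array with contiguous sum co-array. -/
theorem stmt_3 (Lx Ly : ℤ) (hLx : 2 ≤ Lx) (hLy : 2 ≤ Ly) (D : Set (ℤ × ℤ))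
    (hsub : D ⊆ {p : ℤ × ℤ | 0 ≤ p.1 ∧ p.1 ≤ Lx ∧ 0 ≤ p.2 ∧ p.2 ≤ Ly})
    (hsum : D + D = {p : ℤ × ℤ | 0 ≤ p.1 ∧ p.1 ≤ 2 * Lx ∧ 0 ≤ p.2 ∧ p.2 ≤ 2 * Ly}) :
    ({p : ℤ × ℤ | (p.1 = 1 ∨ p.1 = Lx - 1) ∧ (p.2 = 0 ∨ p.2 = Ly)} ∪
     {p : ℤ × ℤ | (p.1 = 0 ∨ p.1 = Lx) ∧ (p.2 = 0 ∨ p.2 = 1 ∨ p.2 = Ly - 1 ∨ p.2 = Ly)})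
      ⊆ D := by
  intro p hp
  obtain ⟨px, py⟩ := p
  simp only [Set.mem_union, Set.mem_setOf_eq] at hp
  set sx := if px ≤ 1 then px else px + Lx with hsxdef
  set sy := if py ≤ 1 then py else py + Ly with hsydef
  have hsx : (px ≤ 1 ∧ sx = px) ∨ (1 < px ∧ sx = px + Lx) := by
    by_cases h : px ≤ 1 <;> simp [hsxdef, h] <;> omega
  have hsy : (py ≤ 1 ∧ sy = py) ∨ (1 < py ∧ sy = py + Ly) := by
    by_cases h : py ≤ 1 <;> simp [hsydef, h] <;> omega
  have hs1 : 0 ≤ sx ∧ sx ≤ 2 * Lx := by omega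
  have hs2 : 0 ≤ sy ∧ sy ≤ 2 * Ly := by omega
  have hmem : (sx, sy) ∈ D + D := by
    rw [hsum]
    exact ⟨hs1.1, hs1.2, hs2.1, hs2.2⟩
  obtain ⟨a, ha, b, hb, hab⟩ := Set.mem_add.mp hmem
  have Ha := hsub ha
  have Hb := hsub hb
  simp only [Set.mem_setOf_eq] at Ha Hb
  have hab1 : a.1 + b.1 = sx := congrArg Prod.fst hab
  have hab2 : a.2 + b.2 = sy := congrArg Prod.snd hab
  have key : a = (px, py) ∨ b = (px, py) := by
    rw [Prod.ext_iff, Prod.ext_iff]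
    omega
  rcases key with h | h
  · rwa [h] at ha
  · rwa [h] at hb
end

section
/- For L ≥ 2 even, define D₀(L) = {0, L} ∪ {1, 3, 5, ..., L−1} and D₁(L) = {0, 1, L−1, L}. Then D₀(L) + D₁(L) = {0, 1, ..., 2L}. -/
open Pointwise

/-- `D₀(L) = {0, L} ∪ {odd n : 1 ≤ n ≤ L-1}`. -/
def D0 (L : ℤ) : Set ℤ := {0, L} ∪ {n : ℤ | Odd n ∧ 1 ≤ n ∧ n ≤ L - 1}

/-- `D₁(L) = {0, 1, L-1, L}`. -/
def D1 (L : ℤ) : Set ℤ := {0, 1, L - 1, L}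

/-- `D₂(L) = {even n : 2 ≤ n ≤ L-2}`. -/
def D2 (L : ℤ) : Set ℤ := {n : ℤ | Even n ∧ 2 ≤ n ∧ n ≤ L - 2}

/-- `D₀(L) + D₁(L) = {0,…,2L}` for even `L ≥ 2`. -/
theorem stmt_4 (L : ℤ) (hL : 2 ≤ L) (hE : Even L) :
    D0 L + D1 L = {n : ℤ | 0 ≤ n ∧ n ≤ 2 * L} := by
  obtain ⟨k, hk⟩ := hE
  ext n
  simp only [D0, D1, Set.mem_add, Set.mem_union, Set.mem_insert_iff,
    Set.mem_singleton_iff, Set.mem_setOf_eq, Odd]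
  constructor
  · rintro ⟨a, (rfl | rfl) | ⟨⟨j, hj⟩, h1, h2⟩, b, (rfl | rfl | rfl | rfl), rfl⟩ <;> omega
  · rintro ⟨h0, h2L⟩
    rcases Int.even_or_odd n with ⟨m, hm⟩ | ⟨m, hm⟩
    · by_cases hz : n = 0
      · exact ⟨0, Or.inl (Or.inl rfl), 0, Or.inl rfl, by omega⟩
      · by_cases hle : n ≤ L
        · exact ⟨n - 1, Or.inr ⟨⟨m - 1, by omega⟩, by omega, by omega⟩, 1, Or.inr (Or.inl rfl), by ring⟩
        · by_cases htop : n = 2 * L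
          · exact ⟨L, Or.inl (Or.inr rfl), L, Or.inr (Or.inr (Or.inr rfl)), by omega⟩
          · exact ⟨n - L + 1, Or.inr ⟨⟨m - k, by omega⟩, by omega, by omega⟩, L - 1,
              Or.inr (Or.inr (Or.inl rfl)), by ring⟩
    · by_cases hle : n ≤ L - 1
      · exact ⟨n, Or.inr ⟨⟨m, by omega⟩, by omega, by omega⟩, 0, Or.inl rfl, by ring⟩
      · exact ⟨n - L, Or.inr ⟨⟨m - k, by omega⟩, by omega, by omega⟩, L, Or.inr (Or.inr (Or.inr rfl)), by ring⟩
end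

section
/- For L ≥ 4 even, define D₀(L) = {0, L} ∪ {1, 3, ..., L−1}, D₁(L) = {0, 1, L−1, L}, and D₂(L) = {2, 4, ..., L−2}. Then (D₀(L) + D₂(L)) ∪ (D₁(L) + D₁(L)) = {0, 1, ..., 2L}. -/
open Pointwise

/-- For even `L ≥ 4`, `(D₀+D₂) ∪ (D₁+D₁) = {0,…,2L}`. -/
theorem stmt_6 (L : ℤ) (hL : 4 ≤ L) (hE : Even L) :
    (D0 L + D2 L) ∪ (D1 L + D1 L) = {n : ℤ | 0 ≤ n ∧ n ≤ 2 * L} := by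
  rw [Int.even_iff] at hE
  ext n
  simp only [Set.mem_union, Set.mem_add, Set.mem_setOf_eq, D0, D1, D2,
    Set.mem_insert_iff, Set.mem_singleton_iff, Set.mem_setOf_eq, Int.even_iff, Int.odd_iff]
  constructor
  · rintro (⟨a, ha, b, hb, rfl⟩ | ⟨a, ha, b, hb, rfl⟩) <;> omega
  · rintro ⟨h0, h2⟩
    by_cases h : n = 0 ∨ n = 1 ∨ n = 2 ∨ n = L - 1 ∨ n = L ∨ n = L + 1 ∨
        n = 2*L - 2 ∨ n = 2*L - 1 ∨ n = 2*L
    · right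
      rcases h with h|h|h|h|h|h|h|h|h
      · exact ⟨0, by tauto, 0, by tauto, by omega⟩
      · exact ⟨0, by tauto, 1, by tauto, by omega⟩
      · exact ⟨1, by tauto, 1, by tauto, by omega⟩
      · exact ⟨0, by tauto, L - 1, by tauto, by omega⟩
      · exact ⟨0, by tauto, L, by tauto, by omega⟩
      · exact ⟨1, by tauto, L, by tauto, by omega⟩
      · exact ⟨L - 1, by tauto, L - 1, by tauto, by omega⟩
      · exact ⟨L - 1, by tauto, L, by tauto, by omega⟩
      · exact ⟨L, by tauto, L, by tauto, by omega⟩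
    · left
      push_neg at h
      rcases Int.even_or_odd n with he | ho
      · rw [Int.even_iff] at he
        by_cases hn : n ≤ L - 2
        · exact ⟨0, Or.inl (Or.inl rfl), n, ⟨he, by omega, by omega⟩, by omega⟩
        · exact ⟨L, Or.inl (Or.inr rfl), n - L, ⟨by omega, by omega, by omega⟩, by omega⟩
      · rw [Int.odd_iff] at ho
        by_cases hn : n ≤ L - 1
        · exact ⟨1, Or.inr ⟨by omega, by omega, by omega⟩, n - 1,
            ⟨by omega, by omega, by omega⟩, by omega⟩
        · exact ⟨n - L + 2, Or.inr ⟨by omega, by omega, by omega⟩, L - 2,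
            ⟨by omega, by omega, by omega⟩, by omega⟩
end

section
/- For even L ≥ 6, the Concentric Rectangular Array D_CRA ⊆ ℤ² with L_x = L_y = L, defined as the union over i ∈ {0,1,2} of {(d_x, d_y) : d_x ∈ D_i(L), d_y ∈ {i, L−i}} ∪ {(d_x, d_y) : d_x ∈ {i, L−i}, d_y ∈ D_i(L)}, where D₀(L) = {0,L} ∪ {1,3,...,L−1}, D₁(L) = {0,1,L−1,L}, D₂(L) = {2,4,...,L−2}, satisfies D_CRA + D_CRA = {0,...,2L} × {0,...,2L}. -/
open Pointwise

/-- The square Concentric Rectangular Array (CRA) with `L_x = L_y = L`: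
the union over `i ∈ {0,1,2}` of `D_i(L) × {i, L-i}` and `{i, L-i} × D_i(L)`. -/
def CRA (L : ℤ) : Set (ℤ × ℤ) :=
  {p : ℤ × ℤ | (p.1 ∈ D0 L ∧ (p.2 = 0 ∨ p.2 = L)) ∨ ((p.1 = 0 ∨ p.1 = L) ∧ p.2 ∈ D0 L) ∨
    (p.1 ∈ D1 L ∧ (p.2 = 1 ∨ p.2 = L - 1)) ∨ ((p.1 = 1 ∨ p.1 = L - 1) ∧ p.2 ∈ D1 L) ∨
    (p.1 ∈ D2 L ∧ (p.2 = 2 ∨ p.2 = L - 2)) ∨ ((p.1 = 2 ∨ p.1 = L - 2) ∧ p.2 ∈ D2 L)}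

lemma memD0 {L x : ℤ} (h : (x % 2 = 1 ∧ 1 ≤ x ∧ x ≤ L - 1) ∨ x = 0 ∨ x = L) : x ∈ D0 L := by
  simp only [D0, Set.mem_union, Set.mem_insert_iff, Set.mem_singleton_iff, Set.mem_setOf_eq,
    Int.odd_iff]
  omega

lemma memD1 {L x : ℤ} (h : x = 0 ∨ x = 1 ∨ x = L - 1 ∨ x = L) : x ∈ D1 L := by
  simp only [D1, Set.mem_insert_iff, Set.mem_singleton_iff]
  omega

lemma memD2 {L x : ℤ} (h : x % 2 = 0 ∧ 2 ≤ x ∧ x ≤ L - 2) : x ∈ D2 L := by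
  simp only [D2, Set.mem_setOf_eq, Int.even_iff]
  omega

lemma memCRA1 (L x y : ℤ) (h1 : (x % 2 = 1 ∧ 1 ≤ x ∧ x ≤ L - 1) ∨ x = 0 ∨ x = L)
    (h2 : y = 0 ∨ y = L) : (x, y) ∈ CRA L := Or.inl ⟨memD0 h1, h2⟩

lemma memCRA2 (L x y : ℤ) (h1 : x = 0 ∨ x = L)
    (h2 : (y % 2 = 1 ∧ 1 ≤ y ∧ y ≤ L - 1) ∨ y = 0 ∨ y = L) : (x, y) ∈ CRA L :=
  Or.inr (Or.inl ⟨h1, memD0 h2⟩)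

lemma memCRA3 (L x y : ℤ) (h1 : x = 0 ∨ x = 1 ∨ x = L - 1 ∨ x = L)
    (h2 : y = 1 ∨ y = L - 1) : (x, y) ∈ CRA L := Or.inr (Or.inr (Or.inl ⟨memD1 h1, h2⟩))

lemma memCRA4 (L x y : ℤ) (h1 : x = 1 ∨ x = L - 1)
    (h2 : y = 0 ∨ y = 1 ∨ y = L - 1 ∨ y = L) : (x, y) ∈ CRA L :=
  Or.inr (Or.inr (Or.inr (Or.inl ⟨h1, memD1 h2⟩)))

lemma memCRA5 (L x y : ℤ) (h1 : x % 2 = 0 ∧ 2 ≤ x ∧ x ≤ L - 2)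
    (h2 : y = 2 ∨ y = L - 2) : (x, y) ∈ CRA L :=
  Or.inr (Or.inr (Or.inr (Or.inr (Or.inl ⟨memD2 h1, h2⟩))))

lemma memCRA6 (L x y : ℤ) (h1 : x = 2 ∨ x = L - 2)
    (h2 : y % 2 = 0 ∧ 2 ≤ y ∧ y ≤ L - 2) : (x, y) ∈ CRA L :=
  Or.inr (Or.inr (Or.inr (Or.inr (Or.inr ⟨h1, memD2 h2⟩))))

lemma CRA_bound {L : ℤ} {p : ℤ × ℤ} (hL : 6 ≤ L) (h : p ∈ CRA L) :
    0 ≤ p.1 ∧ p.1 ≤ L ∧ 0 ≤ p.2 ∧ p.2 ≤ L := by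
  simp only [CRA, D0, D1, D2, Set.mem_setOf_eq, Set.mem_union, Set.mem_insert_iff,
    Set.mem_singleton_iff, Int.odd_iff, Int.even_iff] at h
  omega

lemma key {L : ℤ} (a c b d x y : ℤ) (h1 : (a, c) ∈ CRA L) (h2 : (b, d) ∈ CRA L)
    (hx : a + b = x) (hy : c + d = y) :
    ∃ u ∈ CRA L, ∃ v ∈ CRA L, u + v = ((x, y) : ℤ × ℤ) :=
  ⟨(a, c), h1, (b, d), h2, by rw [Prod.mk_add_mk, hx, hy]⟩

lemma D0sum (L x : ℤ) (hL : 6 ≤ L) (hE : L % 2 = 0) (h0 : 0 ≤ x) (h1 : x ≤ 2 * L) :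
    ∃ a b : ℤ, ((a % 2 = 1 ∧ 1 ≤ a ∧ a ≤ L - 1) ∨ a = 0 ∨ a = L) ∧
      ((b % 2 = 1 ∧ 1 ≤ b ∧ b ≤ L - 1) ∨ b = 0 ∨ b = L) ∧ a + b = x := by
  rcases Int.emod_two_eq x with hp | hp
  · by_cases hc : x = 0 ∨ x = L ∨ x = 2 * L
    · rcases hc with h | h | h
      · exact ⟨0, 0, by omega, by omega, by omega⟩
      · exact ⟨0, L, by omega, by omega, by omega⟩
      · exact ⟨L, L, by omega, by omega, by omega⟩
    · by_cases hl : x ≤ L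
      · exact ⟨1, x - 1, by omega, by omega, by omega⟩
      · exact ⟨L - 1, x - L + 1, by omega, by omega, by omega⟩
  · by_cases hl : x ≤ L
    · exact ⟨x, 0, by omega, by omega, by omega⟩
    · exact ⟨x - L, L, by omega, by omega, by omega⟩

/-- The CRA has a contiguous sum co-array. -/
theorem stmt_7 (L : ℤ) (hL : 6 ≤ L) (hE : Even L) :
    CRA L + CRA L = {p : ℤ × ℤ | 0 ≤ p.1 ∧ p.1 ≤ 2 * L ∧ 0 ≤ p.2 ∧ p.2 ≤ 2 * L} := by
  have hE' : L % 2 = 0 := Int.even_iff.mp hE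
  ext ⟨x, y⟩
  simp only [Set.mem_setOf_eq]
  constructor
  · intro h
    rw [Set.mem_add] at h
    obtain ⟨⟨a, c⟩, ha, ⟨b, d⟩, hb, hsum⟩ := h
    have h1 := CRA_bound hL ha
    have h2 := CRA_bound hL hb
    rw [Prod.mk_add_mk, Prod.mk.injEq] at hsum
    simp only at h1 h2
    omega
  · rintro ⟨hx0, hx1, hy0, hy1⟩
    rw [Set.mem_add]
    by_cases hy : y = 0 ∨ y = L ∨ y = 2 * L
    · obtain ⟨a, b, ha, hb, hab⟩ := D0sum L x hL hE' hx0 hx1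
      rcases hy with h | h | h
      · exact key a 0 b 0 x y (memCRA1 L _ _ ha (by omega)) (memCRA1 L _ _ hb (by omega))
          (by omega) (by omega)
      · exact key a 0 b L x y (memCRA1 L _ _ ha (by omega)) (memCRA1 L _ _ hb (by omega))
          (by omega) (by omega)
      · exact key a L b L x y (memCRA1 L _ _ ha (by omega)) (memCRA1 L _ _ hb (by omega))
          (by omega) (by omega)
    by_cases hx : x = 0 ∨ x = L ∨ x = 2 * L
    · obtain ⟨a, b, ha, hb, hab⟩ := D0sum L y hL hE' hy0 hy1
      rcases hx with h | h | h
      · exact key 0 a 0 b x y (memCRA2 L _ _ (by omega) ha) (memCRA2 L _ _ (by omega) hb)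
          (by omega) (by omega)
      · exact key 0 a L b x y (memCRA2 L _ _ (by omega) ha) (memCRA2 L _ _ (by omega) hb)
          (by omega) (by omega)
      · exact key L a L b x y (memCRA2 L _ _ (by omega) ha) (memCRA2 L _ _ (by omega) hb)
          (by omega) (by omega)
    rcases Int.emod_two_eq x with hpx | hpx <;> rcases Int.emod_two_eq y with hpy | hpy
    · -- x even, y even, neither in {0, L, 2L}
      by_cases hx2 : x = 2 ∨ x = 2 * L - 2
      · rcases hx2 with h | h <;> by_cases hyl : y ≤ L - 2
        · exact key 0 0 2 y x y (memCRA1 L _ _ (by omega) (by omega))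
            (memCRA6 L _ _ (by omega) (by omega)) (by omega) (by omega)
        · exact key 0 L 2 (y - L) x y (memCRA1 L _ _ (by omega) (by omega))
            (memCRA6 L _ _ (by omega) (by omega)) (by omega) (by omega)
        · exact key L 0 (L - 2) y x y (memCRA1 L _ _ (by omega) (by omega))
            (memCRA6 L _ _ (by omega) (by omega)) (by omega) (by omega)
        · exact key L L (L - 2) (y - L) x y (memCRA1 L _ _ (by omega) (by omega))
            (memCRA6 L _ _ (by omega) (by omega)) (by omega) (by omega)
      by_cases hy2 : y = 2 ∨ y = 2 * L - 2
      · rcases hy2 with h | h <;> by_cases hxl : x ≤ L - 2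
        · exact key 0 0 x 2 x y (memCRA1 L _ _ (by omega) (by omega))
            (memCRA5 L _ _ (by omega) (by omega)) (by omega) (by omega)
        · exact key L 0 (x - L) 2 x y (memCRA1 L _ _ (by omega) (by omega))
            (memCRA5 L _ _ (by omega) (by omega)) (by omega) (by omega)
        · exact key 0 L x (L - 2) x y (memCRA1 L _ _ (by omega) (by omega))
            (memCRA5 L _ _ (by omega) (by omega)) (by omega) (by omega)
        · exact key L L (x - L) (L - 2) x y (memCRA1 L _ _ (by omega) (by omega))
            (memCRA5 L _ _ (by omega) (by omega)) (by omega) (by omega)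
      by_cases hxl : x ≤ L - 2 <;> by_cases hyl : y ≤ L - 2
      · exact key (x - 2) 2 2 (y - 2) x y (memCRA5 L _ _ (by omega) (by omega))
          (memCRA6 L _ _ (by omega) (by omega)) (by omega) (by omega)
      · exact key (x - 2) (L - 2) 2 (y - L + 2) x y (memCRA5 L _ _ (by omega) (by omega))
          (memCRA6 L _ _ (by omega) (by omega)) (by omega) (by omega)
      · exact key (x - L + 2) 2 (L - 2) (y - 2) x y (memCRA5 L _ _ (by omega) (by omega))
          (memCRA6 L _ _ (by omega) (by omega)) (by omega) (by omega)
      · exact key (x - L + 2) (L - 2) (L - 2) (y - L + 2) x y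
          (memCRA5 L _ _ (by omega) (by omega)) (memCRA6 L _ _ (by omega) (by omega))
          (by omega) (by omega)
    · -- x even, y odd (x ∉ {0,L,2L})
      by_cases hy1' : y = 1 ∨ y = 2 * L - 1
      · rcases hy1' with h | h <;> by_cases hxl : x ≤ L
        · exact key (x - 1) 0 1 1 x y (memCRA1 L _ _ (by omega) (by omega))
            (memCRA4 L _ _ (by omega) (by omega)) (by omega) (by omega)
        · exact key (x - L + 1) 0 (L - 1) 1 x y (memCRA1 L _ _ (by omega) (by omega))
            (memCRA4 L _ _ (by omega) (by omega)) (by omega) (by omega)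
        · exact key (x - 1) L 1 (L - 1) x y (memCRA1 L _ _ (by omega) (by omega))
            (memCRA4 L _ _ (by omega) (by omega)) (by omega) (by omega)
        · exact key (x - L + 1) L (L - 1) (L - 1) x y (memCRA1 L _ _ (by omega) (by omega))
            (memCRA4 L _ _ (by omega) (by omega)) (by omega) (by omega)
      by_cases hxl : x ≤ L - 2 <;> by_cases hyl : y ≤ L + 1
      · exact key 0 (y - 2) x 2 x y (memCRA2 L _ _ (by omega) (by omega))
          (memCRA5 L _ _ (by omega) (by omega)) (by omega) (by omega)
      · exact key 0 (y - L + 2) x (L - 2) x y (memCRA2 L _ _ (by omega) (by omega))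
          (memCRA5 L _ _ (by omega) (by omega)) (by omega) (by omega)
      · exact key L (y - 2) (x - L) 2 x y (memCRA2 L _ _ (by omega) (by omega))
          (memCRA5 L _ _ (by omega) (by omega)) (by omega) (by omega)
      · exact key L (y - L + 2) (x - L) (L - 2) x y (memCRA2 L _ _ (by omega) (by omega))
          (memCRA5 L _ _ (by omega) (by omega)) (by omega) (by omega)
    · -- x odd, y even (y ∉ {0,L,2L})
      by_cases hx1' : x = 1 ∨ x = 2 * L - 1
      · rcases hx1' with h | h <;> by_cases hyl : y ≤ L
        · exact key 0 (y - 1) 1 1 x y (memCRA2 L _ _ (by omega) (by omega))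
            (memCRA3 L _ _ (by omega) (by omega)) (by omega) (by omega)
        · exact key 0 (y - L + 1) 1 (L - 1) x y (memCRA2 L _ _ (by omega) (by omega))
            (memCRA3 L _ _ (by omega) (by omega)) (by omega) (by omega)
        · exact key L (y - 1) (L - 1) 1 x y (memCRA2 L _ _ (by omega) (by omega))
            (memCRA3 L _ _ (by omega) (by omega)) (by omega) (by omega)
        · exact key L (y - L + 1) (L - 1) (L - 1) x y (memCRA2 L _ _ (by omega) (by omega))
            (memCRA3 L _ _ (by omega) (by omega)) (by omega) (by omega)
      by_cases hxl : x ≤ L + 1 <;> by_cases hyl : y ≤ L - 2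
      · exact key (x - 2) 0 2 y x y (memCRA1 L _ _ (by omega) (by omega))
          (memCRA6 L _ _ (by omega) (by omega)) (by omega) (by omega)
      · exact key (x - 2) L 2 (y - L) x y (memCRA1 L _ _ (by omega) (by omega))
          (memCRA6 L _ _ (by omega) (by omega)) (by omega) (by omega)
      · exact key (x - L + 2) 0 (L - 2) y x y (memCRA1 L _ _ (by omega) (by omega))
          (memCRA6 L _ _ (by omega) (by omega)) (by omega) (by omega)
      · exact key (x - L + 2) L (L - 2) (y - L) x y (memCRA1 L _ _ (by omega) (by omega))
          (memCRA6 L _ _ (by omega) (by omega)) (by omega) (by omega)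
    · -- x odd, y odd
      by_cases hxl : x ≤ L <;> by_cases hyl : y ≤ L
      · exact key x 0 0 y x y (memCRA1 L _ _ (by omega) (by omega))
          (memCRA2 L _ _ (by omega) (by omega)) (by omega) (by omega)
      · exact key x L 0 (y - L) x y (memCRA1 L _ _ (by omega) (by omega))
          (memCRA2 L _ _ (by omega) (by omega)) (by omega) (by omega)
      · exact key (x - L) 0 L y x y (memCRA1 L _ _ (by omega) (by omega))
          (memCRA2 L _ _ (by omega) (by omega)) (by omega) (by omega)
      · exact key (x - L) L L (y - L) x y (memCRA1 L _ _ (by omega) (by omega))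
          (memCRA2 L _ _ (by omega) (by omega)) (by omega) (by omega)
end

section
/- For even L ≥ 6, the Concentric Rectangular Array D_CRA (square case, L_x = L_y = L) satisfies D_CRA − D_CRA = {−L,...,L} × {−L,...,L}, i.e., it has a contiguous difference co-array. -/
open Pointwise

section Aux

variable {L x y n : ℤ}

lemma mem_D0_zero : (0 : ℤ) ∈ D0 L := Or.inl (Or.inl rfl)

lemma mem_D0_L : L ∈ D0 L := Or.inl (Or.inr rfl)

lemma mem_D0_odd (h : Odd n) (h1 : 1 ≤ n) (h2 : n ≤ L - 1) : n ∈ D0 L :=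
  Or.inr ⟨h, h1, h2⟩

lemma mem_D2 (h : Even n) (h1 : 2 ≤ n) (h2 : n ≤ L - 2) : n ∈ D2 L := ⟨h, h1, h2⟩

lemma cra1 (hx : x ∈ D0 L) (hy : y = 0 ∨ y = L) : (x, y) ∈ CRA L :=
  Or.inl ⟨hx, hy⟩

lemma cra2 (hx : x = 0 ∨ x = L) (hy : y ∈ D0 L) : (x, y) ∈ CRA L :=
  Or.inr (Or.inl ⟨hx, hy⟩)

lemma cra4 (hx : x = 1 ∨ x = L - 1) (hy : y ∈ D1 L) : (x, y) ∈ CRA L :=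
  Or.inr (Or.inr (Or.inr (Or.inl ⟨hx, hy⟩)))

lemma cra5 (hx : x ∈ D2 L) (hy : y = 2 ∨ y = L - 2) : (x, y) ∈ CRA L :=
  Or.inr (Or.inr (Or.inr (Or.inr (Or.inl ⟨hx, hy⟩))))

lemma cra6 (hx : x = 2 ∨ x = L - 2) (hy : y ∈ D2 L) : (x, y) ∈ CRA L :=
  Or.inr (Or.inr (Or.inr (Or.inr (Or.inr ⟨hx, hy⟩))))

lemma cra_bounds (hL : 6 ≤ L) {p : ℤ × ℤ} (hp : p ∈ CRA L) :
    0 ≤ p.1 ∧ p.1 ≤ L ∧ 0 ≤ p.2 ∧ p.2 ≤ L := by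
  simp only [CRA, D0, D1, D2, Set.mem_setOf_eq, Set.mem_union, Set.mem_insert_iff,
    Set.mem_singleton_iff] at hp
  rcases hp with ⟨h1, h2⟩ | ⟨h1, h2⟩ | ⟨h1, h2⟩ | ⟨h1, h2⟩ | ⟨h1, h2⟩ | ⟨h1, h2⟩ <;> omega

/-- Symmetry of D0 under `n ↦ L - n`. -/
lemma D0_sym (hE : Even L) (h : n ∈ D0 L) : L - n ∈ D0 L := by
  obtain ⟨m, hm⟩ := hE
  simp only [D0, Set.mem_union, Set.mem_insert_iff, Set.mem_singleton_iff,
    Set.mem_setOf_eq] at h ⊢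
  rcases h with (h | h) | ⟨⟨j, hj⟩, h1, h2⟩
  · exact Or.inl (Or.inr (by omega))
  · exact Or.inl (Or.inl (by omega))
  · exact Or.inr ⟨⟨m - j - 1, by omega⟩, by omega, by omega⟩

lemma D1_sym (h : n ∈ D1 L) : L - n ∈ D1 L := by
  simp only [D1, Set.mem_insert_iff, Set.mem_singleton_iff] at h ⊢
  omega

lemma D2_sym (hE : Even L) (h : n ∈ D2 L) : L - n ∈ D2 L := by
  obtain ⟨m, hm⟩ := hE
  obtain ⟨⟨j, hj⟩, h1, h2⟩ := h
  exact ⟨⟨m - j, by omega⟩, by omega, by omega⟩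

/-- Reflection in the x coordinate. -/
lemma cra_reflx (hE : Even L) (h : (x, y) ∈ CRA L) : (L - x, y) ∈ CRA L := by
  rcases h with ⟨h1, h2⟩ | ⟨h1, h2⟩ | ⟨h1, h2⟩ | ⟨h1, h2⟩ | ⟨h1, h2⟩ | ⟨h1, h2⟩
  · exact Or.inl ⟨D0_sym hE h1, h2⟩
  · exact Or.inr (Or.inl ⟨by omega, h2⟩)
  · exact Or.inr (Or.inr (Or.inl ⟨D1_sym h1, h2⟩))
  · exact Or.inr (Or.inr (Or.inr (Or.inl ⟨by omega, h2⟩)))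
  · exact Or.inr (Or.inr (Or.inr (Or.inr (Or.inl ⟨D2_sym hE h1, h2⟩))))
  · exact Or.inr (Or.inr (Or.inr (Or.inr (Or.inr ⟨by omega, h2⟩))))

/-- Reflection in the y coordinate. -/
lemma cra_refly (hE : Even L) (h : (x, y) ∈ CRA L) : (x, L - y) ∈ CRA L := by
  rcases h with ⟨h1, h2⟩ | ⟨h1, h2⟩ | ⟨h1, h2⟩ | ⟨h1, h2⟩ | ⟨h1, h2⟩ | ⟨h1, h2⟩
  · exact Or.inl ⟨h1, by omega⟩
  · exact Or.inr (Or.inl ⟨h1, D0_sym hE h2⟩)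
  · exact Or.inr (Or.inr (Or.inl ⟨h1, by omega⟩))
  · exact Or.inr (Or.inr (Or.inr (Or.inl ⟨h1, D1_sym h2⟩)))
  · exact Or.inr (Or.inr (Or.inr (Or.inr (Or.inl ⟨h1, by omega⟩))))
  · exact Or.inr (Or.inr (Or.inr (Or.inr (Or.inr ⟨h1, D2_sym hE h2⟩))))

/-- Core covering lemma: every nonnegative difference vector is achieved. -/
lemma cra_key (hL : 6 ≤ L) (hE : Even L) (dx dy : ℤ)
    (hx0 : 0 ≤ dx) (hxL : dx ≤ L) (hy0 : 0 ≤ dy) (hyL : dy ≤ L) :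
    ∃ a ∈ CRA L, ∃ b ∈ CRA L, a - b = (dx, dy) := by
  obtain ⟨m, hm⟩ := hE
  have pairsub : ∀ a1 a2 b1 b2 : ℤ, a1 - b1 = dx → a2 - b2 = dy →
      ((a1, a2) : ℤ × ℤ) - (b1, b2) = (dx, dy) := by
    intro a1 a2 b1 b2 h1 h2
    simp [Prod.ext_iff, h1, h2]
  rcases Int.even_or_odd dx with ⟨j, hj⟩ | ⟨j, hj⟩ <;>
    rcases Int.even_or_odd dy with ⟨k, hk⟩ | ⟨k, hk⟩
  · -- dx even, dy even
    by_cases hdy0 : dy = 0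
    · by_cases hdxL : dx = L
      · exact ⟨(L, 0), cra1 mem_D0_L (Or.inl rfl), (0, 0),
          cra1 mem_D0_zero (Or.inl rfl), pairsub _ _ _ _ (by omega) (by omega)⟩
      · exact ⟨(dx + 1, 0), cra1 (mem_D0_odd ⟨j, by omega⟩ (by omega) (by omega)) (Or.inl rfl),
          (1, 0), cra1 (mem_D0_odd ⟨0, by omega⟩ le_rfl (by omega)) (Or.inl rfl),
          pairsub _ _ _ _ (by omega) (by omega)⟩
    · by_cases hdyL : dy = L
      · by_cases hdxL : dx = L
        · exact ⟨(L, L), cra1 mem_D0_L (Or.inr rfl), (0, 0),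
            cra1 mem_D0_zero (Or.inl rfl), pairsub _ _ _ _ (by omega) (by omega)⟩
        · exact ⟨(dx + 1, L), cra1 (mem_D0_odd ⟨j, by omega⟩ (by omega) (by omega)) (Or.inr rfl),
            (1, 0), cra1 (mem_D0_odd ⟨0, by omega⟩ le_rfl (by omega)) (Or.inl rfl),
            pairsub _ _ _ _ (by omega) (by omega)⟩
      · -- 2 ≤ dy ≤ L - 2
        by_cases hdx0 : dx = 0
        · exact ⟨(0, dy + 1), cra2 (Or.inl rfl) (mem_D0_odd ⟨k, by omega⟩ (by omega) (by omega)),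
            (0, 1), cra2 (Or.inl rfl) (mem_D0_odd ⟨0, by omega⟩ le_rfl (by omega)),
            pairsub _ _ _ _ (by omega) (by omega)⟩
        · by_cases hdxL : dx = L
          · exact ⟨(L, dy + 1), cra2 (Or.inr rfl)
              (mem_D0_odd ⟨k, by omega⟩ (by omega) (by omega)),
              (0, 1), cra2 (Or.inl rfl) (mem_D0_odd ⟨0, by omega⟩ le_rfl (by omega)),
              pairsub _ _ _ _ (by omega) (by omega)⟩
          · by_cases hdx2 : dx = L - 2
            · exact ⟨(L - 2, dy), cra6 (Or.inr rfl) (mem_D2 ⟨k, by omega⟩ (by omega) (by omega)),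
                (0, 0), cra1 mem_D0_zero (Or.inl rfl),
                pairsub _ _ _ _ (by omega) (by omega)⟩
            · by_cases hdy2 : dy = L - 2
              · exact ⟨(L, L), cra1 mem_D0_L (Or.inr rfl),
                  (L - dx, 2), cra5 (mem_D2 ⟨m - j, by omega⟩ (by omega) (by omega)) (Or.inl rfl),
                  pairsub _ _ _ _ (by omega) (by omega)⟩
              · -- 2 ≤ dx ≤ L-4, 2 ≤ dy ≤ L-4
                exact ⟨(L - 2, dy + 2),
                  cra6 (Or.inr rfl) (mem_D2 ⟨k + 1, by omega⟩ (by omega) (by omega)),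
                  (L - 2 - dx, 2),
                  cra5 (mem_D2 ⟨m - 1 - j, by omega⟩ (by omega) (by omega)) (Or.inl rfl),
                  pairsub _ _ _ _ (by omega) (by omega)⟩
  · -- dx even, dy odd (1 ≤ dy ≤ L-1)
    by_cases hdx0 : dx = 0
    · exact ⟨(0, dy), cra2 (Or.inl rfl) (mem_D0_odd ⟨k, hk⟩ (by omega) (by omega)),
        (0, 0), cra1 mem_D0_zero (Or.inl rfl), pairsub _ _ _ _ (by omega) (by omega)⟩
    · by_cases hdxL : dx = L
      · exact ⟨(L, dy), cra2 (Or.inr rfl) (mem_D0_odd ⟨k, hk⟩ (by omega) (by omega)),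
          (0, 0), cra1 mem_D0_zero (Or.inl rfl), pairsub _ _ _ _ (by omega) (by omega)⟩
      · by_cases hdy1 : dy = L - 1
        · exact ⟨(L - 1, L - 1), cra4 (Or.inr rfl) (Or.inr (Or.inr (Or.inl rfl))),
            (L - 1 - dx, 0),
            cra1 (mem_D0_odd ⟨m - 1 - j, by omega⟩ (by omega) (by omega)) (Or.inl rfl),
            pairsub _ _ _ _ (by omega) (by omega)⟩
        · -- dy ≤ L - 3
          exact ⟨(L, dy + 2), cra2 (Or.inr rfl) (mem_D0_odd ⟨k + 1, by omega⟩ (by omega) (by omega)),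
            (L - dx, 2), cra5 (mem_D2 ⟨m - j, by omega⟩ (by omega) (by omega)) (Or.inl rfl),
            pairsub _ _ _ _ (by omega) (by omega)⟩
  · -- dx odd (1 ≤ dx ≤ L-1), dy even
    by_cases hdy0 : dy = 0
    · exact ⟨(dx, 0), cra1 (mem_D0_odd ⟨j, hj⟩ (by omega) (by omega)) (Or.inl rfl),
        (0, 0), cra1 mem_D0_zero (Or.inl rfl), pairsub _ _ _ _ (by omega) (by omega)⟩
    · by_cases hdyL : dy = L
      · exact ⟨(dx, L), cra1 (mem_D0_odd ⟨j, hj⟩ (by omega) (by omega)) (Or.inr rfl),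
          (0, 0), cra1 mem_D0_zero (Or.inl rfl), pairsub _ _ _ _ (by omega) (by omega)⟩
      · by_cases hdx1 : dx = L - 1
        · exact ⟨(L - 1, L - 1), cra4 (Or.inr rfl) (Or.inr (Or.inr (Or.inl rfl))),
            (0, L - 1 - dy),
            cra2 (Or.inl rfl) (mem_D0_odd ⟨m - 1 - k, by omega⟩ (by omega) (by omega)),
            pairsub _ _ _ _ (by omega) (by omega)⟩
        · -- dx ≤ L - 3, 2 ≤ dy ≤ L - 2
          exact ⟨(L - 2, dy), cra6 (Or.inr rfl) (mem_D2 ⟨k, hk⟩ (by omega) (by omega)),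
            (L - 2 - dx, 0),
            cra1 (mem_D0_odd ⟨m - 1 - j - 1, by omega⟩ (by omega) (by omega)) (Or.inl rfl),
            pairsub _ _ _ _ (by omega) (by omega)⟩
  · -- dx odd, dy odd, both in [1, L-1]
    exact ⟨(L, dy), cra2 (Or.inr rfl) (mem_D0_odd ⟨k, hk⟩ (by omega) (by omega)),
      (L - dx, 0),
      cra1 (mem_D0_odd ⟨m - j - 1, by omega⟩ (by omega) (by omega)) (Or.inl rfl),
      pairsub _ _ _ _ (by omega) (by omega)⟩

end Aux

/-- The CRA has a contiguous difference co-array. -/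
theorem stmt_8 (L : ℤ) (hL : 6 ≤ L) (hE : Even L) :
    CRA L - CRA L = {p : ℤ × ℤ | -L ≤ p.1 ∧ p.1 ≤ L ∧ -L ≤ p.2 ∧ p.2 ≤ L} := by
  ext p
  constructor
  · rintro hp
    rw [Set.mem_sub] at hp
    obtain ⟨a, ha, b, hb, hab⟩ := hp
    obtain ⟨ha1, ha2, ha3, ha4⟩ := cra_bounds hL ha
    obtain ⟨hb1, hb2, hb3, hb4⟩ := cra_bounds hL hb
    have h1 : p.1 = a.1 - b.1 := by rw [← hab]; rfl
    have h2 : p.2 = a.2 - b.2 := by rw [← hab]; rfl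
    exact ⟨by omega, by omega, by omega, by omega⟩
  · rintro ⟨h1, h2, h3, h4⟩
    rw [Set.mem_sub]
    rcases le_or_gt 0 p.1 with hx | hx <;> rcases le_or_gt 0 p.2 with hy | hy
    · obtain ⟨a, ha, b, hb, hab⟩ := cra_key hL hE p.1 p.2 hx h2 hy h4
      exact ⟨a, ha, b, hb, hab⟩
    · obtain ⟨⟨a1, a2⟩, ha, ⟨b1, b2⟩, hb, hab⟩ :=
        cra_key hL hE p.1 (-p.2) hx h2 (by omega) (by omega)
      simp only [Prod.ext_iff, Prod.fst_sub, Prod.snd_sub] at hab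
      refine ⟨(a1, L - a2), cra_refly hE ha, (b1, L - b2), cra_refly hE hb, ?_⟩
      simp only [Prod.ext_iff, Prod.fst_sub, Prod.snd_sub]
      constructor <;> omega
    · obtain ⟨⟨a1, a2⟩, ha, ⟨b1, b2⟩, hb, hab⟩ :=
        cra_key hL hE (-p.1) p.2 (by omega) (by omega) hy h4
      simp only [Prod.ext_iff, Prod.fst_sub, Prod.snd_sub] at hab
      refine ⟨(L - a1, a2), cra_reflx hE ha, (L - b1, b2), cra_reflx hE hb, ?_⟩
      simp only [Prod.ext_iff, Prod.fst_sub, Prod.snd_sub]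
      constructor <;> omega
    · obtain ⟨⟨a1, a2⟩, ha, ⟨b1, b2⟩, hb, hab⟩ :=
        cra_key hL hE (-p.1) (-p.2) (by omega) (by omega) (by omega) (by omega)
      simp only [Prod.ext_iff, Prod.fst_sub, Prod.snd_sub] at hab
      refine ⟨(L - a1, L - a2), cra_refly hE (cra_reflx hE ha),
        (L - b1, L - b2), cra_refly hE (cra_reflx hE hb), ?_⟩
      simp only [Prod.ext_iff, Prod.fst_sub, Prod.snd_sub]
      constructor <;> omega
end

section
/- Let D ⊆ {0,...,L_x} × {0,...,L_y} with L_x, L_y ≥ 2 satisfy D + D = {0,...,2L_x} × {0,...,2L_y}. Then D contains at least 8 unordered pairs of distinct points at Euclidean distance 1 (i.e., S(1) ≥ 8). -/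
open Pointwise

lemma forced_pair (Lx Ly : ℤ) (D : Set (ℤ × ℤ))
    (hsub : D ⊆ {p : ℤ × ℤ | 0 ≤ p.1 ∧ p.1 ≤ Lx ∧ 0 ≤ p.2 ∧ p.2 ≤ Ly})
    (hsum : D + D = {p : ℤ × ℤ | 0 ≤ p.1 ∧ p.1 ≤ 2 * Lx ∧ 0 ≤ p.2 ∧ p.2 ≤ 2 * Ly})
    (p q : ℤ × ℤ)
    (hpq : 0 ≤ p.1 + q.1 ∧ p.1 + q.1 ≤ 2 * Lx ∧ 0 ≤ p.2 + q.2 ∧ p.2 + q.2 ≤ 2 * Ly)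
    (hforce : ∀ a b : ℤ × ℤ,
      (0 ≤ a.1 ∧ a.1 ≤ Lx ∧ 0 ≤ a.2 ∧ a.2 ≤ Ly) →
      (0 ≤ b.1 ∧ b.1 ≤ Lx ∧ 0 ≤ b.2 ∧ b.2 ≤ Ly) →
      a + b = p + q → (a = p ∧ b = q) ∨ (a = q ∧ b = p)) :
    p ∈ D ∧ q ∈ D := by
  have hmem : p + q ∈ D + D := by
    rw [hsum]
    exact hpq
  rw [Set.mem_add] at hmem
  obtain ⟨a, ha, b, hb, hab⟩ := hmem
  rcases hforce a b (hsub ha) (hsub hb) hab with ⟨h1, h2⟩ | ⟨h1, h2⟩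
  · subst h1; subst h2; exact ⟨ha, hb⟩
  · subst h1; subst h2; exact ⟨hb, ha⟩

/-- Any array with contiguous sum co-array has at least 8 unordered
pairs of distinct points at Euclidean distance `1` (equivalently, at least
`16` ordered pairs; squared distance `1` encodes distance `1`). -/
theorem stmt_15 (Lx Ly : ℤ) (hLx : 2 ≤ Lx) (hLy : 2 ≤ Ly) (D : Set (ℤ × ℤ))
    (hsub : D ⊆ {p : ℤ × ℤ | 0 ≤ p.1 ∧ p.1 ≤ Lx ∧ 0 ≤ p.2 ∧ p.2 ≤ Ly})
    (hsum : D + D = {p : ℤ × ℤ | 0 ≤ p.1 ∧ p.1 ≤ 2 * Lx ∧ 0 ≤ p.2 ∧ p.2 ≤ 2 * Ly}) :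
    2 * 8 ≤ {pq : (ℤ × ℤ) × (ℤ × ℤ) | pq.1 ∈ D ∧ pq.2 ∈ D ∧ pq.1 ≠ pq.2 ∧
      (pq.1.1 - pq.2.1) ^ 2 + (pq.1.2 - pq.2.2) ^ 2 = 1}.ncard := by
  have F := forced_pair Lx Ly D hsub hsum
  have h1 := F (0,0) (1,0) (by constructor <;> simp <;> omega)
    (by intro a b h1 h2 h3; simp [Prod.ext_iff] at h3 ⊢; omega)
  have h2 := F (0,0) (0,1) (by constructor <;> simp <;> omega)
    (by intro a b h1 h2 h3; simp [Prod.ext_iff] at h3 ⊢; omega)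
  have h3 := F (Lx,0) (Lx-1,0) (by simp; omega)
    (by intro a b h1 h2 h3; simp [Prod.ext_iff] at h3 ⊢; omega)
  have h4 := F (Lx,0) (Lx,1) (by simp; omega)
    (by intro a b h1 h2 h3; simp [Prod.ext_iff] at h3 ⊢; omega)
  have h5 := F (0,Ly) (1,Ly) (by simp; omega)
    (by intro a b h1 h2 h3; simp [Prod.ext_iff] at h3 ⊢; omega)
  have h6 := F (0,Ly) (0,Ly-1) (by simp; omega)
    (by intro a b h1 h2 h3; simp [Prod.ext_iff] at h3 ⊢; omega)
  have h7 := F (Lx,Ly) (Lx-1,Ly) (by simp; omega)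
    (by intro a b h1 h2 h3; simp [Prod.ext_iff] at h3 ⊢; omega)
  have h8 := F (Lx,Ly) (Lx,Ly-1) (by simp; omega)
    (by intro a b h1 h2 h3; simp [Prod.ext_iff] at h3 ⊢; omega)
  set S : Set ((ℤ × ℤ) × (ℤ × ℤ)) :=
    {pq : (ℤ × ℤ) × (ℤ × ℤ) | pq.1 ∈ D ∧ pq.2 ∈ D ∧ pq.1 ≠ pq.2 ∧
      (pq.1.1 - pq.2.1) ^ 2 + (pq.1.2 - pq.2.2) ^ 2 = 1} with hS
  have hbox : ({p : ℤ × ℤ | 0 ≤ p.1 ∧ p.1 ≤ Lx ∧ 0 ≤ p.2 ∧ p.2 ≤ Ly}).Finite := by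
    apply (Set.finite_Icc ((0:ℤ),(0:ℤ)) (Lx,Ly)).subset
    intro p hp
    simp [Prod.le_def] at hp ⊢
    omega
  have hSfin : S.Finite := by
    apply (hbox.prod hbox).subset
    rintro ⟨x, y⟩ ⟨hx, hy, _⟩
    exact ⟨hsub hx, hsub hy⟩
  set l : List ((ℤ × ℤ) × (ℤ × ℤ)) :=
    [((0,0),(1,0)), ((1,0),(0,0)), ((0,0),(0,1)), ((0,1),(0,0)),
     ((Lx,0),(Lx-1,0)), ((Lx-1,0),(Lx,0)), ((Lx,0),(Lx,1)), ((Lx,1),(Lx,0)),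
     ((0,Ly),(1,Ly)), ((1,Ly),(0,Ly)), ((0,Ly),(0,Ly-1)), ((0,Ly-1),(0,Ly)),
     ((Lx,Ly),(Lx-1,Ly)), ((Lx-1,Ly),(Lx,Ly)), ((Lx,Ly),(Lx,Ly-1)), ((Lx,Ly-1),(Lx,Ly))]
    with hl
  have hnodup : l.Nodup := by
    simp [hl, Prod.ext_iff]
    omega
  have hsubS : ↑l.toFinset ⊆ S := by
    intro x hx
    rw [Finset.mem_coe, List.mem_toFinset, hl] at hx
    simp only [List.mem_cons, List.not_mem_nil, or_false] at hx
    rcases hx with rfl|rfl|rfl|rfl|rfl|rfl|rfl|rfl|rfl|rfl|rfl|rfl|rfl|rfl|rfl|rfl <;>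
      exact ⟨by tauto, by tauto,
        by simp only [ne_eq, Prod.mk.injEq, not_and]; omega, by norm_num⟩
  calc (2*8 : ℕ) = l.toFinset.card := by
        rw [List.toFinset_card_of_nodup hnodup]; simp [hl]
    _ = (↑l.toFinset : Set _).ncard := (Set.ncard_coe_finset _).symm
    _ ≤ S.ncard := Set.ncard_le_ncard hsubS hSfin
end

section
/- For even L ≥ 6, every element of the square Concentric Rectangular Array D_CRA is essential for the sum co-array: for every d ∈ D_CRA, the sumset (D_CRA \ {d}) + (D_CRA \ {d}) is a proper subset of {0,...,2L} × {0,...,2L}. -/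
open Pointwise

/-- Arithmetic (omega-friendly) description of CRA membership. -/
def Arith (L x y : ℤ) : Prop :=
  ((x = 0 ∨ x = L ∨ (x % 2 = 1 ∧ 1 ≤ x ∧ x ≤ L - 1)) ∧ (y = 0 ∨ y = L)) ∨
  ((x = 0 ∨ x = L) ∧ (y = 0 ∨ y = L ∨ (y % 2 = 1 ∧ 1 ≤ y ∧ y ≤ L - 1))) ∨
  ((x = 0 ∨ x = 1 ∨ x = L - 1 ∨ x = L) ∧ (y = 1 ∨ y = L - 1)) ∨
  ((x = 1 ∨ x = L - 1) ∧ (y = 0 ∨ y = 1 ∨ y = L - 1 ∨ y = L)) ∨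
  ((x % 2 = 0 ∧ 2 ≤ x ∧ x ≤ L - 2) ∧ (y = 2 ∨ y = L - 2)) ∨
  ((x = 2 ∨ x = L - 2) ∧ (y % 2 = 0 ∧ 2 ≤ y ∧ y ≤ L - 2))

lemma D0_arith {L n : ℤ} (h : n ∈ D0 L) :
    n = 0 ∨ n = L ∨ (n % 2 = 1 ∧ 1 ≤ n ∧ n ≤ L - 1) := by
  rcases h with (h | h) | ⟨⟨k, hk⟩, h1, h2⟩
  · exact Or.inl h
  · exact Or.inr (Or.inl h)
  · exact Or.inr (Or.inr ⟨by omega, h1, h2⟩)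

lemma D1_arith {L n : ℤ} (h : n ∈ D1 L) :
    n = 0 ∨ n = 1 ∨ n = L - 1 ∨ n = L := by
  rcases h with h | h | h | h
  · exact Or.inl h
  · exact Or.inr (Or.inl h)
  · exact Or.inr (Or.inr (Or.inl h))
  · exact Or.inr (Or.inr (Or.inr h))

lemma D2_arith {L n : ℤ} (h : n ∈ D2 L) :
    n % 2 = 0 ∧ 2 ≤ n ∧ n ≤ L - 2 := by
  obtain ⟨⟨k, hk⟩, h1, h2⟩ := h
  exact ⟨by omega, h1, h2⟩

lemma mem_CRA_arith {L : ℤ} {p : ℤ × ℤ} (h : p ∈ CRA L) : Arith L p.1 p.2 := by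
  rcases h with ⟨hx, hy⟩ | ⟨hx, hy⟩ | ⟨hx, hy⟩ | ⟨hx, hy⟩ | ⟨hx, hy⟩ | ⟨hx, hy⟩
  · exact Or.inl ⟨D0_arith hx, hy⟩
  · exact Or.inr (Or.inl ⟨hx, D0_arith hy⟩)
  · exact Or.inr (Or.inr (Or.inl ⟨D1_arith hx, hy⟩))
  · exact Or.inr (Or.inr (Or.inr (Or.inl ⟨hx, D1_arith hy⟩)))
  · exact Or.inr (Or.inr (Or.inr (Or.inr (Or.inl ⟨D2_arith hx, hy⟩))))
  · exact Or.inr (Or.inr (Or.inr (Or.inr (Or.inr ⟨hx, D2_arith hy⟩))))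

lemma arith_swap {L x y : ℤ} (h : Arith L x y) : Arith L y x := by
  unfold Arith at h ⊢
  rcases h with ⟨a, b⟩ | ⟨a, b⟩ | ⟨a, b⟩ | ⟨a, b⟩ | ⟨a, b⟩ | ⟨a, b⟩
  · exact Or.inr (Or.inl ⟨b, a⟩)
  · exact Or.inl ⟨b, a⟩
  · exact Or.inr (Or.inr (Or.inr (Or.inl ⟨b, a⟩)))
  · exact Or.inr (Or.inr (Or.inl ⟨b, a⟩))
  · exact Or.inr (Or.inr (Or.inr (Or.inr (Or.inr ⟨b, a⟩))))
  · exact Or.inr (Or.inr (Or.inr (Or.inr (Or.inl ⟨b, a⟩))))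

section rows
variable {L x y : ℤ} (hL : 6 ≤ L) (hE : L % 2 = 0) (h : Arith L x y)
include hL hE h

lemma bnd : 0 ≤ x ∧ x ≤ L ∧ 0 ≤ y ∧ y ≤ L := by
  unfold Arith at h; omega

lemma row0 (hy : y = 0) : x = 0 ∨ x = L ∨ (x % 2 = 1 ∧ 1 ≤ x ∧ x ≤ L - 1) := by
  unfold Arith at h; omega

lemma rowL (hy : y = L) : x = 0 ∨ x = L ∨ (x % 2 = 1 ∧ 1 ≤ x ∧ x ≤ L - 1) := by
  unfold Arith at h; omega

lemma row1 (hy : y = 1) : x = 0 ∨ x = 1 ∨ x = L - 1 ∨ x = L := by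
  unfold Arith at h; omega

lemma rowL1 (hy : y = L - 1) : x = 0 ∨ x = 1 ∨ x = L - 1 ∨ x = L := by
  unfold Arith at h; omega

lemma row2 (hy : y = 2) : x % 2 = 0 ∧ 2 ≤ x ∧ x ≤ L - 2 := by
  unfold Arith at h; omega

lemma rowL2 (hy : y = L - 2) : x % 2 = 0 ∧ 2 ≤ x ∧ x ≤ L - 2 := by
  unfold Arith at h; omega

lemma row3 (hy : y = 3) : x = 0 ∨ x = L := by
  unfold Arith at h; omega

lemma rowL3 (hy : y = L - 3) : x = 0 ∨ x = L := by
  unfold Arith at h; omega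

end rows

/-- If a point of the full range has all its representations using `d`,
then the square range is not contained in the deleted sumset. -/
lemma key_s16 (L : ℤ) (d : ℤ × ℤ) (w1 w2 : ℤ)
    (hw : 0 ≤ w1 ∧ w1 ≤ 2 * L ∧ 0 ≤ w2 ∧ w2 ≤ 2 * L)
    (huniq : ∀ a1 a2 b1 b2 : ℤ, Arith L a1 a2 → Arith L b1 b2 →
      a1 + b1 = w1 → a2 + b2 = w2 →
      (a1 = d.1 ∧ a2 = d.2) ∨ (b1 = d.1 ∧ b2 = d.2))
    (hsup : {p : ℤ × ℤ | 0 ≤ p.1 ∧ p.1 ≤ 2 * L ∧ 0 ≤ p.2 ∧ p.2 ≤ 2 * L} ⊆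
      (CRA L \ {d}) + (CRA L \ {d})) : False := by
  have hm : ((w1, w2) : ℤ × ℤ) ∈ (CRA L \ {d}) + (CRA L \ {d}) := hsup hw
  rw [Set.mem_add] at hm
  obtain ⟨a, ha, b, hb, hab⟩ := hm
  have e1 : a.1 + b.1 = w1 := congrArg Prod.fst hab
  have e2 : a.2 + b.2 = w2 := congrArg Prod.snd hab
  rcases huniq a.1 a.2 b.1 b.2 (mem_CRA_arith ha.1) (mem_CRA_arith hb.1) e1 e2 with h | h
  · exact ha.2 (Set.mem_singleton_iff.mpr (Prod.ext_iff.mpr h))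
  · exact hb.2 (Set.mem_singleton_iff.mpr (Prod.ext_iff.mpr h))


section uniq
variable (L : ℤ) (hL : 6 ≤ L) (hE : L % 2 = 0)
include hL hE

lemma uniq1 : ∀ a1 a2 b1 b2 : ℤ, Arith L a1 a2 → Arith L b1 b2 →
    a1 + b1 = 0 → a2 + b2 = 0 → (a1 = 0 ∧ a2 = 0) ∨ (b1 = 0 ∧ b2 = 0) := by
  intro a1 a2 b1 b2 h1 h2 e1 e2
  have B1 := bnd hL hE h1; have B2 := bnd hL hE h2; omega

lemma uniq2 : ∀ a1 a2 b1 b2 : ℤ, Arith L a1 a2 → Arith L b1 b2 →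
    a1 + b1 = 2 * L → a2 + b2 = 0 → (a1 = L ∧ a2 = 0) ∨ (b1 = L ∧ b2 = 0) := by
  intro a1 a2 b1 b2 h1 h2 e1 e2
  have B1 := bnd hL hE h1; have B2 := bnd hL hE h2; omega

lemma uniq3 (x : ℤ) (hx : x % 2 = 1 ∧ 1 ≤ x ∧ x ≤ L - 1) :
    ∀ a1 a2 b1 b2 : ℤ, Arith L a1 a2 → Arith L b1 b2 →
    a1 + b1 = x → a2 + b2 = 0 → (a1 = x ∧ a2 = 0) ∨ (b1 = x ∧ b2 = 0) := by
  intro a1 a2 b1 b2 h1 h2 e1 e2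
  have B1 := bnd hL hE h1; have B2 := bnd hL hE h2
  have r1 := row0 hL hE h1 (by omega)
  have r2 := row0 hL hE h2 (by omega)
  omega

lemma uniq4 : ∀ a1 a2 b1 b2 : ℤ, Arith L a1 a2 → Arith L b1 b2 →
    a1 + b1 = 0 → a2 + b2 = 2 * L → (a1 = 0 ∧ a2 = L) ∨ (b1 = 0 ∧ b2 = L) := by
  intro a1 a2 b1 b2 h1 h2 e1 e2
  have B1 := bnd hL hE h1; have B2 := bnd hL hE h2; omega

lemma uniq5 : ∀ a1 a2 b1 b2 : ℤ, Arith L a1 a2 → Arith L b1 b2 →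
    a1 + b1 = 2 * L → a2 + b2 = 2 * L → (a1 = L ∧ a2 = L) ∨ (b1 = L ∧ b2 = L) := by
  intro a1 a2 b1 b2 h1 h2 e1 e2
  have B1 := bnd hL hE h1; have B2 := bnd hL hE h2; omega

lemma uniq6 (x : ℤ) (hx : x % 2 = 1 ∧ 1 ≤ x ∧ x ≤ L - 1) :
    ∀ a1 a2 b1 b2 : ℤ, Arith L a1 a2 → Arith L b1 b2 →
    a1 + b1 = x + L → a2 + b2 = 2 * L → (a1 = x ∧ a2 = L) ∨ (b1 = x ∧ b2 = L) := by
  intro a1 a2 b1 b2 h1 h2 e1 e2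
  have B1 := bnd hL hE h1; have B2 := bnd hL hE h2
  have r1 := rowL hL hE h1 (by omega)
  have r2 := rowL hL hE h2 (by omega)
  omega

lemma uniq7 (y : ℤ) (hy : y % 2 = 1 ∧ 1 ≤ y ∧ y ≤ L - 1) :
    ∀ a1 a2 b1 b2 : ℤ, Arith L a1 a2 → Arith L b1 b2 →
    a1 + b1 = 0 → a2 + b2 = y → (a1 = 0 ∧ a2 = y) ∨ (b1 = 0 ∧ b2 = y) := by
  intro a1 a2 b1 b2 h1 h2 e1 e2
  have B1 := bnd hL hE h1; have B2 := bnd hL hE h2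
  have r1 := row0 hL hE (arith_swap h1) (by omega)
  have r2 := row0 hL hE (arith_swap h2) (by omega)
  omega

lemma uniq8 (y : ℤ) (hy : y % 2 = 1 ∧ 1 ≤ y ∧ y ≤ L - 1) :
    ∀ a1 a2 b1 b2 : ℤ, Arith L a1 a2 → Arith L b1 b2 →
    a1 + b1 = 2 * L → a2 + b2 = y + L → (a1 = L ∧ a2 = y) ∨ (b1 = L ∧ b2 = y) := by
  intro a1 a2 b1 b2 h1 h2 e1 e2
  have B1 := bnd hL hE h1; have B2 := bnd hL hE h2
  have r1 := rowL hL hE (arith_swap h1) (by omega)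
  have r2 := rowL hL hE (arith_swap h2) (by omega)
  omega

lemma uniq9 : ∀ a1 a2 b1 b2 : ℤ, Arith L a1 a2 → Arith L b1 b2 →
    a1 + b1 = 2 → a2 + b2 = 1 → (a1 = 1 ∧ a2 = 1) ∨ (b1 = 1 ∧ b2 = 1) := by
  intro a1 a2 b1 b2 h1 h2 e1 e2
  have B1 := bnd hL hE h1; have B2 := bnd hL hE h2
  rcases (show (a2 = 0 ∧ b2 = 1) ∨ (a2 = 1 ∧ b2 = 0) by omega) with ⟨p, q⟩ | ⟨p, q⟩
  · have r1 := row0 hL hE h1 p; have r2 := row1 hL hE h2 q; omega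
  · have r1 := row1 hL hE h1 p; have r2 := row0 hL hE h2 q; omega

lemma uniq10 : ∀ a1 a2 b1 b2 : ℤ, Arith L a1 a2 → Arith L b1 b2 →
    a1 + b1 = 2 * L - 2 → a2 + b2 = 1 → (a1 = L - 1 ∧ a2 = 1) ∨ (b1 = L - 1 ∧ b2 = 1) := by
  intro a1 a2 b1 b2 h1 h2 e1 e2
  have B1 := bnd hL hE h1; have B2 := bnd hL hE h2
  rcases (show (a2 = 0 ∧ b2 = 1) ∨ (a2 = 1 ∧ b2 = 0) by omega) with ⟨p, q⟩ | ⟨p, q⟩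
  · have r1 := row0 hL hE h1 p; have r2 := row1 hL hE h2 q; omega
  · have r1 := row1 hL hE h1 p; have r2 := row0 hL hE h2 q; omega

lemma uniq11 : ∀ a1 a2 b1 b2 : ℤ, Arith L a1 a2 → Arith L b1 b2 →
    a1 + b1 = 2 → a2 + b2 = 2 * L - 1 →
    (a1 = 1 ∧ a2 = L - 1) ∨ (b1 = 1 ∧ b2 = L - 1) := by
  intro a1 a2 b1 b2 h1 h2 e1 e2
  have B1 := bnd hL hE h1; have B2 := bnd hL hE h2
  rcases (show (a2 = L - 1 ∧ b2 = L) ∨ (a2 = L ∧ b2 = L - 1) by omega) with ⟨p, q⟩ | ⟨p, q⟩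
  · have r1 := rowL1 hL hE h1 p; have r2 := rowL hL hE h2 q; omega
  · have r1 := rowL hL hE h1 p; have r2 := rowL1 hL hE h2 q; omega

lemma uniq12 : ∀ a1 a2 b1 b2 : ℤ, Arith L a1 a2 → Arith L b1 b2 →
    a1 + b1 = 2 * L - 2 → a2 + b2 = 2 * L - 1 →
    (a1 = L - 1 ∧ a2 = L - 1) ∨ (b1 = L - 1 ∧ b2 = L - 1) := by
  intro a1 a2 b1 b2 h1 h2 e1 e2
  have B1 := bnd hL hE h1; have B2 := bnd hL hE h2
  rcases (show (a2 = L - 1 ∧ b2 = L) ∨ (a2 = L ∧ b2 = L - 1) by omega) with ⟨p, q⟩ | ⟨p, q⟩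
  · have r1 := rowL1 hL hE h1 p; have r2 := rowL hL hE h2 q; omega
  · have r1 := rowL hL hE h1 p; have r2 := rowL1 hL hE h2 q; omega

lemma uniq13 (x : ℤ) (hx : x % 2 = 0 ∧ 4 ≤ x ∧ x ≤ L - 2) :
    ∀ a1 a2 b1 b2 : ℤ, Arith L a1 a2 → Arith L b1 b2 →
    a1 + b1 = x → a2 + b2 = 2 → (a1 = x ∧ a2 = 2) ∨ (b1 = x ∧ b2 = 2) := by
  intro a1 a2 b1 b2 h1 h2 e1 e2
  have B1 := bnd hL hE h1; have B2 := bnd hL hE h2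
  rcases (show (a2 = 0 ∧ b2 = 2) ∨ (a2 = 1 ∧ b2 = 1) ∨ (a2 = 2 ∧ b2 = 0) by omega) with
    ⟨p, q⟩ | ⟨p, q⟩ | ⟨p, q⟩
  · have r1 := row0 hL hE h1 p; have r2 := row2 hL hE h2 q; omega
  · have r1 := row1 hL hE h1 p; have r2 := row1 hL hE h2 q; omega
  · have r1 := row2 hL hE h1 p; have r2 := row0 hL hE h2 q; omega

lemma uniq14 : ∀ a1 a2 b1 b2 : ℤ, Arith L a1 a2 → Arith L b1 b2 →
    a1 + b1 = 2 → a2 + b2 = 3 → (a1 = 2 ∧ a2 = 2) ∨ (b1 = 2 ∧ b2 = 2) := by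
  intro a1 a2 b1 b2 h1 h2 e1 e2
  have B1 := bnd hL hE h1; have B2 := bnd hL hE h2
  rcases (show (a2 = 0 ∧ b2 = 3) ∨ (a2 = 1 ∧ b2 = 2) ∨ (a2 = 2 ∧ b2 = 1) ∨
      (a2 = 3 ∧ b2 = 0) by omega) with ⟨p, q⟩ | ⟨p, q⟩ | ⟨p, q⟩ | ⟨p, q⟩
  · have r1 := row0 hL hE h1 p; have r2 := row3 hL hE h2 q; omega
  · have r1 := row1 hL hE h1 p; have r2 := row2 hL hE h2 q; omega
  · have r1 := row2 hL hE h1 p; have r2 := row1 hL hE h2 q; omega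
  · have r1 := row3 hL hE h1 p; have r2 := row0 hL hE h2 q; omega

lemma uniq15 (x : ℤ) (hx : x % 2 = 0 ∧ 4 ≤ x ∧ x ≤ L - 2) :
    ∀ a1 a2 b1 b2 : ℤ, Arith L a1 a2 → Arith L b1 b2 →
    a1 + b1 = x → a2 + b2 = 2 * L - 2 →
    (a1 = x ∧ a2 = L - 2) ∨ (b1 = x ∧ b2 = L - 2) := by
  intro a1 a2 b1 b2 h1 h2 e1 e2
  have B1 := bnd hL hE h1; have B2 := bnd hL hE h2
  rcases (show (a2 = L - 2 ∧ b2 = L) ∨ (a2 = L - 1 ∧ b2 = L - 1) ∨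
      (a2 = L ∧ b2 = L - 2) by omega) with ⟨p, q⟩ | ⟨p, q⟩ | ⟨p, q⟩
  · have r1 := rowL2 hL hE h1 p; have r2 := rowL hL hE h2 q; omega
  · have r1 := rowL1 hL hE h1 p; have r2 := rowL1 hL hE h2 q; omega
  · have r1 := rowL hL hE h1 p; have r2 := rowL2 hL hE h2 q; omega

lemma uniq16 : ∀ a1 a2 b1 b2 : ℤ, Arith L a1 a2 → Arith L b1 b2 →
    a1 + b1 = 2 → a2 + b2 = 2 * L - 3 →
    (a1 = 2 ∧ a2 = L - 2) ∨ (b1 = 2 ∧ b2 = L - 2) := by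
  intro a1 a2 b1 b2 h1 h2 e1 e2
  have B1 := bnd hL hE h1; have B2 := bnd hL hE h2
  rcases (show (a2 = L - 3 ∧ b2 = L) ∨ (a2 = L - 2 ∧ b2 = L - 1) ∨
      (a2 = L - 1 ∧ b2 = L - 2) ∨ (a2 = L ∧ b2 = L - 3) by omega) with
    ⟨p, q⟩ | ⟨p, q⟩ | ⟨p, q⟩ | ⟨p, q⟩
  · have r1 := rowL3 hL hE h1 p; have r2 := rowL hL hE h2 q; omega
  · have r1 := rowL2 hL hE h1 p; have r2 := rowL1 hL hE h2 q; omega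
  · have r1 := rowL1 hL hE h1 p; have r2 := rowL2 hL hE h2 q; omega
  · have r1 := rowL hL hE h1 p; have r2 := rowL3 hL hE h2 q; omega

lemma uniq17 (y : ℤ) (hy : y % 2 = 0 ∧ 4 ≤ y ∧ y ≤ L - 2) :
    ∀ a1 a2 b1 b2 : ℤ, Arith L a1 a2 → Arith L b1 b2 →
    a1 + b1 = 2 → a2 + b2 = y → (a1 = 2 ∧ a2 = y) ∨ (b1 = 2 ∧ b2 = y) := by
  intro a1 a2 b1 b2 h1 h2 e1 e2
  have B1 := bnd hL hE h1; have B2 := bnd hL hE h2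
  rcases (show (a1 = 0 ∧ b1 = 2) ∨ (a1 = 1 ∧ b1 = 1) ∨ (a1 = 2 ∧ b1 = 0) by omega) with
    ⟨p, q⟩ | ⟨p, q⟩ | ⟨p, q⟩
  · have r1 := row0 hL hE (arith_swap h1) p; have r2 := row2 hL hE (arith_swap h2) q; omega
  · have r1 := row1 hL hE (arith_swap h1) p; have r2 := row1 hL hE (arith_swap h2) q; omega
  · have r1 := row2 hL hE (arith_swap h1) p; have r2 := row0 hL hE (arith_swap h2) q; omega

lemma uniq18 (y : ℤ) (hy : y % 2 = 0 ∧ 4 ≤ y ∧ y ≤ L - 2) :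
    ∀ a1 a2 b1 b2 : ℤ, Arith L a1 a2 → Arith L b1 b2 →
    a1 + b1 = 2 * L - 2 → a2 + b2 = y →
    (a1 = L - 2 ∧ a2 = y) ∨ (b1 = L - 2 ∧ b2 = y) := by
  intro a1 a2 b1 b2 h1 h2 e1 e2
  have B1 := bnd hL hE h1; have B2 := bnd hL hE h2
  rcases (show (a1 = L - 2 ∧ b1 = L) ∨ (a1 = L - 1 ∧ b1 = L - 1) ∨
      (a1 = L ∧ b1 = L - 2) by omega) with ⟨p, q⟩ | ⟨p, q⟩ | ⟨p, q⟩
  · have r1 := rowL2 hL hE (arith_swap h1) p; have r2 := rowL hL hE (arith_swap h2) q; omega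
  · have r1 := rowL1 hL hE (arith_swap h1) p; have r2 := rowL1 hL hE (arith_swap h2) q; omega
  · have r1 := rowL hL hE (arith_swap h1) p; have r2 := rowL2 hL hE (arith_swap h2) q; omega

end uniq

/-- Every element of the CRA is essential for the sum co-array. -/
theorem stmt_16 (L : ℤ) (hL : 6 ≤ L) (hE : Even L) :
    ∀ d ∈ CRA L,
      (CRA L \ {d}) + (CRA L \ {d}) ⊂
        {p : ℤ × ℤ | 0 ≤ p.1 ∧ p.1 ≤ 2 * L ∧ 0 ≤ p.2 ∧ p.2 ≤ 2 * L} := by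
  intro d hd
  have hE' : L % 2 = 0 := Int.even_iff.mp hE
  have hdA := mem_CRA_arith hd
  rw [Set.ssubset_def]
  constructor
  · intro p hp
    rw [Set.mem_add] at hp
    obtain ⟨a, ha, b, hb, hab⟩ := hp
    have h1 := mem_CRA_arith ha.1
    have h2 := mem_CRA_arith hb.1
    have e1 : p.1 = a.1 + b.1 := (congrArg Prod.fst hab).symm
    have e2 : p.2 = a.2 + b.2 := (congrArg Prod.snd hab).symm
    simp only [Set.mem_setOf_eq]
    have B1 := bnd hL hE' h1
    have B2 := bnd hL hE' h2
    omega
  · intro hsup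
    unfold Arith at hdA
    rcases hdA with ⟨hx, hy⟩ | ⟨hx, hy⟩ | ⟨hx, hy⟩ | ⟨hx, hy⟩ | ⟨hx, hy⟩ | ⟨hx, hy⟩
    · rcases hx with u | u | u
      · rcases hy with v | v
        · exact key_s16 L d 0 0 (by omega) (by rw [u, v]; exact uniq1 L hL hE') hsup
        · exact key_s16 L d 0 (2 * L) (by omega) (by rw [u, v]; exact uniq4 L hL hE') hsup
      · rcases hy with v | v
        · exact key_s16 L d (2 * L) 0 (by omega) (by rw [u, v]; exact uniq2 L hL hE') hsup
        · exact key_s16 L d (2 * L) (2 * L) (by omega) (by rw [u, v]; exact uniq5 L hL hE') hsup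
      · rcases hy with v | v
        · exact key_s16 L d d.1 0 (by omega) (by rw [v]; exact uniq3 L hL hE' d.1 u) hsup
        · exact key_s16 L d (d.1 + L) (2 * L) (by omega)
            (by rw [v]; exact uniq6 L hL hE' d.1 u) hsup
    · rcases hx with u | u
      · rcases hy with v | v | v
        · exact key_s16 L d 0 0 (by omega) (by rw [u, v]; exact uniq1 L hL hE') hsup
        · exact key_s16 L d 0 (2 * L) (by omega) (by rw [u, v]; exact uniq4 L hL hE') hsup
        · exact key_s16 L d 0 d.2 (by omega) (by rw [u]; exact uniq7 L hL hE' d.2 v) hsup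
      · rcases hy with v | v | v
        · exact key_s16 L d (2 * L) 0 (by omega) (by rw [u, v]; exact uniq2 L hL hE') hsup
        · exact key_s16 L d (2 * L) (2 * L) (by omega) (by rw [u, v]; exact uniq5 L hL hE') hsup
        · exact key_s16 L d (2 * L) (d.2 + L) (by omega)
            (by rw [u]; exact uniq8 L hL hE' d.2 v) hsup
    · rcases hx with u | u | u | u
      · rcases hy with v | v
        · exact key_s16 L d 0 d.2 (by omega)
            (by rw [u]; exact uniq7 L hL hE' d.2 ⟨by omega, by omega, by omega⟩) hsup
        · exact key_s16 L d 0 d.2 (by omega)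
            (by rw [u]; exact uniq7 L hL hE' d.2 ⟨by omega, by omega, by omega⟩) hsup
      · rcases hy with v | v
        · exact key_s16 L d 2 1 (by omega) (by rw [u, v]; exact uniq9 L hL hE') hsup
        · exact key_s16 L d 2 (2 * L - 1) (by omega) (by rw [u, v]; exact uniq11 L hL hE') hsup
      · rcases hy with v | v
        · exact key_s16 L d (2 * L - 2) 1 (by omega) (by rw [u, v]; exact uniq10 L hL hE') hsup
        · exact key_s16 L d (2 * L - 2) (2 * L - 1) (by omega)
            (by rw [u, v]; exact uniq12 L hL hE') hsup
      · rcases hy with v | v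
        · exact key_s16 L d (2 * L) (d.2 + L) (by omega)
            (by rw [u]; exact uniq8 L hL hE' d.2 ⟨by omega, by omega, by omega⟩) hsup
        · exact key_s16 L d (2 * L) (d.2 + L) (by omega)
            (by rw [u]; exact uniq8 L hL hE' d.2 ⟨by omega, by omega, by omega⟩) hsup
    · rcases hx with u | u
      · rcases hy with v | v | v | v
        · exact key_s16 L d d.1 0 (by omega)
            (by rw [v]; exact uniq3 L hL hE' d.1 ⟨by omega, by omega, by omega⟩) hsup
        · exact key_s16 L d 2 1 (by omega) (by rw [u, v]; exact uniq9 L hL hE') hsup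
        · exact key_s16 L d 2 (2 * L - 1) (by omega) (by rw [u, v]; exact uniq11 L hL hE') hsup
        · exact key_s16 L d (d.1 + L) (2 * L) (by omega)
            (by rw [v]; exact uniq6 L hL hE' d.1 ⟨by omega, by omega, by omega⟩) hsup
      · rcases hy with v | v | v | v
        · exact key_s16 L d d.1 0 (by omega)
            (by rw [v]; exact uniq3 L hL hE' d.1 ⟨by omega, by omega, by omega⟩) hsup
        · exact key_s16 L d (2 * L - 2) 1 (by omega) (by rw [u, v]; exact uniq10 L hL hE') hsup
        · exact key_s16 L d (2 * L - 2) (2 * L - 1) (by omega)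
            (by rw [u, v]; exact uniq12 L hL hE') hsup
        · exact key_s16 L d (d.1 + L) (2 * L) (by omega)
            (by rw [v]; exact uniq6 L hL hE' d.1 ⟨by omega, by omega, by omega⟩) hsup
    · rcases eq_or_ne d.1 2 with u2 | u2
      · rcases hy with v | v
        · exact key_s16 L d 2 3 (by omega) (by rw [u2, v]; exact uniq14 L hL hE') hsup
        · exact key_s16 L d 2 (2 * L - 3) (by omega) (by rw [u2, v]; exact uniq16 L hL hE') hsup
      · rcases hy with v | v
        · exact key_s16 L d d.1 2 (by omega)
            (by rw [v]; exact uniq13 L hL hE' d.1 ⟨hx.1, by omega, hx.2.2⟩) hsup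
        · exact key_s16 L d d.1 (2 * L - 2) (by omega)
            (by rw [v]; exact uniq15 L hL hE' d.1 ⟨hx.1, by omega, hx.2.2⟩) hsup
    · rcases eq_or_ne d.2 2 with v2 | v2
      · rcases hx with u | u
        · exact key_s16 L d 2 3 (by omega) (by rw [u, v2]; exact uniq14 L hL hE') hsup
        · exact key_s16 L d d.1 2 (by omega)
            (by rw [v2]; exact uniq13 L hL hE' d.1 ⟨by omega, by omega, by omega⟩) hsup
      · rcases hx with u | u
        · exact key_s16 L d 2 d.2 (by omega)
            (by rw [u]; exact uniq17 L hL hE' d.2 ⟨hy.1, by omega, hy.2.2⟩) hsup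
        · exact key_s16 L d (2 * L - 2) d.2 (by omega)
            (by rw [u]; exact uniq18 L hL hE' d.2 ⟨hy.1, by omega, hy.2.2⟩) hsup
end
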